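/- arXiv:1704.06037 — 2 statements merged into one kernel-verified Lean document; each statement's English description precedes it below -/
import Mathlib

section
/- Let ≻₀ and ≻₁ be strict total orders on a finite set A, let a, b ∈ A with a ≻₀ b and b ≻₁ a. Let w(≻₁) denote the strict total order obtained from ≻₁ by swapping the positions of a and b. Then d(≻₁, ≻₀) > d(w(≻₁), ≻₀), where d is the inversion distance. -/
open Classical

/-- Inversion distance between two preference relations: the number of (ordered
representatives of) unordered pairs ranked oppositely. For strict total orders,
each oppositely-ranked unordered pair {x,y} is counted exactly once. -/
noncomputable def invDist {A : Type*} [Fintype A] (r r' : A → A → Prop) : ℕ :=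
  {p : A × A | r p.1 p.2 ∧ r' p.2 p.1}.ncard

/-- Frequency of a preference in a profile (list of preferences). -/
noncomputable def freq {A : Type*} (π : List (A → A → Prop)) (r : A → A → Prop) : ℕ :=
  {i : Fin π.length | π.get i = r}.ncard

/-- Number of voters in the profile ranking `a` above `b`. -/
noncomputable def votesFor {A : Type*} (π : List (A → A → Prop)) (a b : A) : ℕ :=
  {i : Fin π.length | π.get i a b}.ncard

/-- The preference obtained by swapping alternatives `a` and `b` in the ranking. -/
def swapPref {A : Type*} [DecidableEq A] (a b : A) (r : A → A → Prop) : A → A → Prop :=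
  fun x y => r (Equiv.swap a b x) (Equiv.swap a b y)

open scoped Classical in
/-- Auxiliary injection used in the proof of `invDist_swap_lt`. -/
noncomputable def swapInj {A : Type*} (r0 : A → A → Prop) (a b : A) : A × A → A × A :=
  fun p =>
    if p.1 = a then (if r0 p.2 a then (a, p.2) else (b, p.2))
    else if p.1 = b then (b, p.2)
    else if p.2 = a then (p.1, a)
    else if p.2 = b then (if r0 b p.1 then (p.1, b) else (p.1, a))
    else p

open scoped Classical in
/-- Retraction of `swapInj` on the relevant set. -/
noncomputable def swapRet {A : Type*} (r0 : A → A → Prop) (a b : A) : A × A → A × A :=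
  fun p =>
    if p.1 = b then (if r0 p.2 a then (b, p.2) else (a, p.2))
    else if p.2 = a then (if r0 b p.1 then (p.1, a) else (p.1, b))
    else p

/-- If `a ≻₀ b` and `b ≻₁ a`, then swapping `a` and `b` in `≻₁` strictly
decreases the inversion distance to `≻₀`. -/
theorem invDist_swap_lt {A : Type*} [Fintype A] [DecidableEq A]
    (r0 r1 : A → A → Prop) (hr0 : IsStrictTotalOrder A r0) (hr1 : IsStrictTotalOrder A r1)
    (a b : A) (hab : a ≠ b) (h0 : r0 a b) (h1 : r1 b a) :
    invDist (swapPref a b r1) r0 < invDist r1 r0 := by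
  classical
  set σ := Equiv.swap a b with hσ
  have hswap : ∀ x, σ (σ x) = x := fun x => Equiv.swap_apply_self a b x
  have sva : σ a = b := Equiv.swap_apply_left a b
  have svb : σ b = a := Equiv.swap_apply_right a b
  have svx : ∀ {x}, x ≠ a → x ≠ b → σ x = x := fun hx1 hx2 =>
    Equiv.swap_apply_of_ne_of_ne hx1 hx2
  have tr0 : ∀ {x y z}, r0 x y → r0 y z → r0 x z := fun h h' => hr0.trans _ _ _ h h'
  have tr1 : ∀ {x y z}, r1 x y → r1 y z → r1 x z := fun h h' => hr1.trans _ _ _ h h'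
  have ir0 : ∀ {x}, ¬ r0 x x := fun {x} h => hr0.irrefl x h
  have ir1 : ∀ {x}, ¬ r1 x x := fun {x} h => hr1.irrefl x h
  have as0 : ∀ {x y}, r0 x y → ¬ r0 y x := fun h h' => ir0 (tr0 h h')
  have as1 : ∀ {x y}, r1 x y → ¬ r1 y x := fun h h' => ir1 (tr1 h h')
  set S1 : Set (A × A) := {p : A × A | r1 p.1 p.2 ∧ r0 p.2 p.1} with hS1
  set S2 : Set (A × A) := {p : A × A | r1 p.1 p.2 ∧ r0 (σ p.2) (σ p.1)} with hS2
  -- Step 1: the inversion set of the swapped preference is the image of S2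
  have himg : {p : A × A | swapPref a b r1 p.1 p.2 ∧ r0 p.2 p.1}
      = (fun p : A × A => (σ p.1, σ p.2)) '' S2 := by
    ext ⟨u, v⟩
    constructor
    · rintro ⟨huv, hvu⟩
      exact ⟨(σ u, σ v), ⟨huv, by simpa [hswap] using hvu⟩, by simp [hswap]⟩
    · rintro ⟨⟨x, y⟩, ⟨hx1, hx2⟩, heq⟩
      simp only [Prod.mk.injEq] at heq
      obtain ⟨rfl, rfl⟩ := heq
      exact ⟨by show r1 (σ (σ x)) (σ (σ y)); rw [hswap, hswap]; exact hx1, by simpa [hswap] using hx2⟩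
  have einj : Function.Injective (fun p : A × A => (σ p.1, σ p.2)) := by
    intro p q h
    simp only [Prod.mk.injEq] at h
    exact Prod.ext (σ.injective h.1) (σ.injective h.2)
  -- Step 2: key properties of the injection
  have hkey : ∀ p ∈ S2, swapInj r0 a b p ∈ S1 \ {((b : A), a)} ∧
      swapRet r0 a b (swapInj r0 a b p) = p := by
    rintro ⟨u, v⟩ ⟨hp1, hp2⟩
    simp only [hS2, Set.mem_setOf_eq] at hp1 hp2
    by_cases hua : u = a
    · subst u
      have hva : v ≠ a := fun h => ir1 (h ▸ hp1)
      have hvb : v ≠ b := fun h => as1 h1 (h ▸ hp1)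
      have hp2' : r0 v b := by rwa [sva, svx hva hvb] at hp2
      by_cases hva0 : r0 v a
      · have hf : swapInj r0 a b (a, v) = (a, v) := by
          simp [swapInj, hva0]
        refine ⟨?_, ?_⟩
        · rw [hf]
          exact ⟨⟨hp1, hva0⟩, by simp [Prod.ext_iff, hab]⟩
        · rw [hf]
          simp only [swapRet]
          rw [if_neg hab, if_neg hva]
      · have hf : swapInj r0 a b (a, v) = (b, v) := by
          simp [swapInj, hva0]
        refine ⟨?_, ?_⟩
        · rw [hf]
          exact ⟨⟨tr1 h1 hp1, hp2'⟩, by simp [Prod.ext_iff, hva]⟩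
        · rw [hf]; simp [swapRet, hva0]
    · by_cases hub : u = b
      · subst u
        have hvb : v ≠ b := fun h => ir1 (h ▸ hp1)
        have hva : v ≠ a := fun h => as0 h0 (by rwa [h, sva, svb] at hp2)
        have hp2' : r0 v a := by rwa [svb, svx hva hvb] at hp2
        have hf : swapInj r0 a b (b, v) = (b, v) := by
          simp [swapInj, Ne.symm hab]
        refine ⟨?_, ?_⟩
        · rw [hf]
          exact ⟨⟨hp1, tr0 hp2' h0⟩, by simp [Prod.ext_iff, hva]⟩
        · rw [hf]; simp [swapRet, hp2']
      · by_cases hva : v = a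
        · subst v
          have hp2' : r0 b u := by rwa [sva, svx hua hub] at hp2
          have hf : swapInj r0 a b (u, a) = (u, a) := by
            simp [swapInj, hua, hub]
          refine ⟨?_, ?_⟩
          · rw [hf]
            exact ⟨⟨hp1, tr0 h0 hp2'⟩, by simp [Prod.ext_iff, hub]⟩
          · rw [hf]; simp [swapRet, hub, hp2']
        · by_cases hvb : v = b
          · subst v
            have hp2' : r0 a u := by rwa [svb, svx hua hub] at hp2
            by_cases hbu : r0 b u
            · have hf : swapInj r0 a b (u, b) = (u, b) := by
                simp [swapInj, hua, hub, Ne.symm hab, hbu]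
              refine ⟨?_, ?_⟩
              · rw [hf]
                refine ⟨⟨hp1, hbu⟩, ?_⟩
                intro h
                rw [Set.mem_singleton_iff, Prod.ext_iff] at h
                exact hub h.1
              · rw [hf]
                simp only [swapRet]
                rw [if_neg hub, if_neg (Ne.symm hab)]
            · have hf : swapInj r0 a b (u, b) = (u, a) := by
                simp [swapInj, hua, hub, Ne.symm hab, hbu]
              refine ⟨?_, ?_⟩
              · rw [hf]
                exact ⟨⟨tr1 hp1 h1, hp2'⟩, by simp [Prod.ext_iff, hub]⟩
              · rw [hf]; simp [swapRet, hub, hbu]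
          · have hp2' : r0 v u := by rwa [svx hva hvb, svx hua hub] at hp2
            have hf : swapInj r0 a b (u, v) = (u, v) := by
              simp [swapInj, hua, hub, hva, hvb]
            refine ⟨?_, ?_⟩
            · rw [hf]
              exact ⟨⟨hp1, hp2'⟩, by simp [Prod.ext_iff, hub]⟩
            · rw [hf]; simp [swapRet, hub, hva]
  have hsub : swapInj r0 a b '' S2 ⊆ S1 \ {((b : A), a)} := by
    rintro _ ⟨p, hp, rfl⟩
    exact (hkey p hp).1
  have hinjOn : Set.InjOn (swapInj r0 a b) S2 := by
    intro p hp q hq h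
    rw [← (hkey p hp).2, ← (hkey q hq).2, h]
  have hba : ((b : A), a) ∈ S1 := ⟨h1, h0⟩
  calc invDist (swapPref a b r1) r0
      = S2.ncard := by
        rw [invDist, himg, Set.ncard_image_of_injective _ einj]
    _ = (swapInj r0 a b '' S2).ncard := (Set.ncard_image_of_injOn hinjOn).symm
    _ ≤ (S1 \ {((b : A), a)}).ncard := Set.ncard_le_ncard hsub (Set.toFinite _)
    _ < S1.ncard := Set.ncard_diff_singleton_lt_of_mem hba (Set.toFinite _)
    _ = invDist r1 r0 := rfl
end

section
/- Let π be a preference profile on a finite set A of alternatives and let ≻₀ be a preference such that Flexible Condition 1 holds: for all preferences ≻', ≻, if μ_π(≻') > μ_π(≻) then d(≻', ≻₀) ≤ d(≻, ≻₀). Then for any two alternatives a, b with a ≻₀ b, alternative a weakly beats b in the majority relation: the number of voters in π preferring a to b is at least the number preferring b to a. -/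
open Classical

lemma swapPref_swapPref {A : Type*} [DecidableEq A] (a b : A) (r : A → A → Prop) :
    swapPref a b (swapPref a b r) = r := by
  funext x y
  simp [swapPref]

lemma swapPref_sto {A : Type*} [DecidableEq A] (a b : A) (r : A → A → Prop)
    (h : IsStrictTotalOrder A r) : IsStrictTotalOrder A (swapPref a b r) := by
  haveI := h
  refine { trichotomous := ?_, irrefl := ?_, trans := ?_ }
  · intro x y
    rcases trichotomous_of r (Equiv.swap a b x) (Equiv.swap a b y) with h1 | h1 | h1
    · intro hxy _; exact absurd h1 hxy
    · intro _ _; exact (Equiv.swap a b).injective h1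
    · intro _ hyx; exact absurd h1 hyx
  · intro x
    exact irrefl_of r _
  · intro x y z h1 h2
    exact trans_of r h1 h2

/-- Key combinatorial lemma: if `r0 a b` but `r b a`, then swapping `a` and `b`
in `r` strictly decreases the inversion distance to `r0`. -/
lemma invDist_swapPref_lt {A : Type*} [Fintype A] [DecidableEq A] (r r0 : A → A → Prop)
    (hr : IsStrictTotalOrder A r) (hr0 : IsStrictTotalOrder A r0)
    (a b : A) (hab : r0 a b) (hba : r b a) :
    invDist (swapPref a b r) r0 < invDist r r0 := by
  classical
  haveI := hr; haveI := hr0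
  set σ := Equiv.swap a b with hσdef
  have asymr : ∀ x y : A, r x y → r y x → False := fun x y h1 h2 =>
    irrefl_of r x (trans_of r h1 h2)
  have asym0 : ∀ x y : A, r0 x y → r0 y x → False := fun x y h1 h2 =>
    irrefl_of r0 x (trans_of r0 h1 h2)
  have ne_of_r : ∀ x y : A, r x y → x ≠ y := fun x y h hxy =>
    irrefl_of r y (hxy ▸ h)
  have tot0 : ∀ x y : A, x ≠ y → ¬ r0 y x → r0 x y := by
    intro x y hne h
    rcases trichotomous_of r0 x y with h1 | h1 | h1
    · exact h1
    · exact absurd h1 hne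
    · exact absurd h1 h
  have σa : σ a = b := Equiv.swap_apply_left a b
  have σb : σ b = a := Equiv.swap_apply_right a b
  have σother : ∀ x : A, x ≠ a → x ≠ b → σ x = x := fun x h1 h2 =>
    Equiv.swap_apply_of_ne_of_ne h1 h2
  -- the two disagreement sets
  set D0 : Set (A × A) := {p | r p.1 p.2 ∧ r0 p.2 p.1} with hD0
  set g : A → A → A × A :=
    fun u v => if r0 v u then (u, v) else if u = a then (b, v) else (u, a) with hg
  have g_pos : ∀ u v : A, r0 v u → g u v = (u, v) := by
    intro u v h
    show (if r0 v u then ((u, v) : A × A) else if u = a then (b, v) else (u, a)) = (u, v)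
    rw [if_pos h]
  have g_neg1 : ∀ u v : A, ¬ r0 v u → u = a → g u v = (b, v) := by
    intro u v h h'
    show (if r0 v u then ((u, v) : A × A) else if u = a then (b, v) else (u, a)) = (b, v)
    rw [if_neg h, if_pos h']
  have g_neg2 : ∀ u v : A, ¬ r0 v u → u ≠ a → g u v = (u, a) := by
    intro u v h h'
    show (if r0 v u then ((u, v) : A × A) else if u = a then (b, v) else (u, a)) = (u, a)
    rw [if_neg h, if_neg h']
  -- structure of "D1" elements not already in D0
  have struct : ∀ u v : A, r u v → r0 (σ v) (σ u) → ¬ r0 v u →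
      (u = a ∧ v ≠ a ∧ v ≠ b ∧ r a v ∧ r0 v b) ∨
      (v = b ∧ u ≠ a ∧ u ≠ b ∧ r u b ∧ r0 a u) := by
    intro u v h1 h2 h3
    have huv : u ≠ v := ne_of_r u v h1
    have h0uv : r0 u v := tot0 u v huv h3
    by_cases hua : u = a
    · have hvb : v ≠ b := by
        intro hvb
        rw [hua, hvb] at h1
        exact asymr a b h1 hba
      have hva : v ≠ a := by
        intro hva
        rw [hua, hva] at huv
        exact huv rfl
      left
      rw [σother v hva hvb, hua, σa] at h2
      rw [hua] at h1
      exact ⟨hua, hva, hvb, h1, h2⟩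
    · by_cases hub : u = b
      · exfalso
        by_cases hva : v = a
        · rw [hub, hva] at h0uv
          exact asym0 a b hab h0uv
        · have hvb : v ≠ b := by
            intro hvb
            rw [hub, hvb] at huv
            exact huv rfl
          rw [σother v hva hvb, hub, σb] at h2
          rw [hub] at h0uv
          exact asym0 a b hab (trans_of r0 h0uv h2)
      · rw [σother u hua hub] at h2
        by_cases hva : v = a
        · exfalso
          rw [hva, σa] at h2
          rw [hva] at h0uv
          exact asym0 b u h2 (trans_of r0 h0uv hab)
        · by_cases hvb : v = b
          · right
            rw [hvb, σb] at h2
            rw [hvb] at h1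
            exact ⟨hvb, hua, hub, h1, h2⟩
          · exfalso
            rw [σother v hva hvb] at h2
            exact h3 h2
  have mem_g : ∀ u v : A, r u v → r0 (σ v) (σ u) →
      g u v ∈ D0 ∧ g u v ≠ (b, a) := by
    intro u v h1 h2
    by_cases h3 : r0 v u
    · rw [g_pos u v h3]
      refine ⟨⟨h1, h3⟩, ?_⟩
      intro hq
      have hu : u = b := congrArg Prod.fst hq
      have hv : v = a := congrArg Prod.snd hq
      rw [hu, hv, σa, σb] at h2
      exact asym0 a b hab h2
    · rcases struct u v h1 h2 h3 with ⟨hu, hva, hvb, hrav, h0vb⟩ | ⟨hv, hua, hub, hrub, h0au⟩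
      · rw [g_neg1 u v h3 hu]
        refine ⟨⟨trans_of r hba hrav, h0vb⟩, ?_⟩
        intro hq
        exact hva (congrArg Prod.snd hq)
      · rw [g_neg2 u v h3 hua]
        refine ⟨⟨trans_of r hrub hba, h0au⟩, ?_⟩
        intro hq
        exact hub (congrArg Prod.fst hq)
  have inj_g : ∀ u v : A, r u v → r0 (σ v) (σ u) →
      ∀ u' v' : A, r u' v' → r0 (σ v') (σ u') →
      g u v = g u' v' → u = u' ∧ v = v' := by
    intro u v h1 h2 u' v' h1' h2' heq
    by_cases h3 : r0 v u <;> by_cases h3' : r0 v' u'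
    · rw [g_pos u v h3, g_pos u' v' h3'] at heq
      exact ⟨congrArg Prod.fst heq, congrArg Prod.snd heq⟩
    · rw [g_pos u v h3] at heq
      exfalso
      rcases struct u' v' h1' h2' h3' with ⟨hu', hva', hvb', _, _⟩ | ⟨hv', hua', hub', _, _⟩
      · rw [g_neg1 u' v' h3' hu'] at heq
        have hu : u = b := congrArg Prod.fst heq
        have hv : v = v' := congrArg Prod.snd heq
        rw [hu, hv, σb, σother v' hva' hvb'] at h2
        rw [hu'] at h3'
        exact h3' h2
      · rw [g_neg2 u' v' h3' hua'] at heq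
        have hu : u = u' := congrArg Prod.fst heq
        have hv : v = a := congrArg Prod.snd heq
        rw [hu, hv, σa, σother u' hua' hub'] at h2
        rw [hv'] at h3'
        exact h3' h2
    · rw [g_pos u' v' h3'] at heq
      exfalso
      rcases struct u v h1 h2 h3 with ⟨hu, hva, hvb, _, _⟩ | ⟨hv, hua, hub, _, _⟩
      · rw [g_neg1 u v h3 hu] at heq
        have hu' : u' = b := (congrArg Prod.fst heq).symm
        have hv' : v' = v := (congrArg Prod.snd heq).symm
        rw [hu', hv', σb, σother v hva hvb] at h2'
        rw [hu] at h3
        exact h3 h2'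
      · rw [g_neg2 u v h3 hua] at heq
        have hu' : u' = u := (congrArg Prod.fst heq).symm
        have hv' : v' = a := (congrArg Prod.snd heq).symm
        rw [hu', hv', σa, σother u hua hub] at h2'
        rw [hv] at h3
        exact h3 h2'
    · rcases struct u v h1 h2 h3 with ⟨hu, hva, hvb, _, _⟩ | ⟨hv, hua, hub, _, _⟩ <;>
        rcases struct u' v' h1' h2' h3' with ⟨hu', hva', hvb', _, _⟩ | ⟨hv', hua', hub', _, _⟩
      · rw [g_neg1 u v h3 hu, g_neg1 u' v' h3' hu'] at heq
        exact ⟨hu.trans hu'.symm, congrArg Prod.snd heq⟩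
      · rw [g_neg1 u v h3 hu, g_neg2 u' v' h3' hua'] at heq
        exact absurd (congrArg Prod.fst heq).symm hub'
      · rw [g_neg2 u v h3 hua, g_neg1 u' v' h3' hu'] at heq
        exact absurd (congrArg Prod.fst heq) hub
      · rw [g_neg2 u v h3 hua, g_neg2 u' v' h3' hua'] at heq
        exact ⟨congrArg Prod.fst heq, hv.trans hv'.symm⟩
  -- assemble
  set S1 : Set (A × A) := {p | swapPref a b r p.1 p.2 ∧ r0 p.2 p.1} with hS1
  have hS1fact : ∀ p ∈ S1, r (σ p.1) (σ p.2) ∧ r0 (σ (σ p.2)) (σ (σ p.1)) := by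
    rintro ⟨x, y⟩ ⟨h1, h2⟩
    refine ⟨h1, ?_⟩
    simp only [hσdef, Equiv.swap_apply_self]
    exact h2
  have hmaps : ∀ p ∈ S1, g (σ p.1) (σ p.2) ∈ D0 \ {((b : A), a)} := by
    intro p hp
    obtain ⟨h1, h2⟩ := hS1fact p hp
    obtain ⟨hm, hne⟩ := mem_g _ _ h1 h2
    exact ⟨hm, hne⟩
  have hinj : Set.InjOn (fun p : A × A => g (σ p.1) (σ p.2)) S1 := by
    intro p hp p' hp' heq
    obtain ⟨h1, h2⟩ := hS1fact p hp
    obtain ⟨h1', h2'⟩ := hS1fact p' hp'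
    obtain ⟨e1, e2⟩ := inj_g _ _ h1 h2 _ _ h1' h2' heq
    exact Prod.ext (σ.injective e1) (σ.injective e2)
  have hle : S1.ncard ≤ (D0 \ {((b : A), a)}).ncard :=
    Set.ncard_le_ncard_of_injOn _ hmaps hinj (Set.toFinite _)
  have hlt : (D0 \ {((b : A), a)}).ncard < D0.ncard :=
    Set.ncard_diff_singleton_lt_of_mem ⟨hba, hab⟩ (Set.toFinite _)
  exact lt_of_le_of_lt hle hlt

/-- Flexible Condition 1 implies weak majority agreement with `≻₀`: if
`a ≻₀ b` then at least as many voters prefer `a` to `b` as `b` to `a`. -/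
theorem flexible_implies_weak_majority {A : Type*} [Fintype A]
    (hK : 3 ≤ Fintype.card A)
    (π : List (A → A → Prop)) (hπ : ∀ r ∈ π, IsStrictTotalOrder A r)
    (r0 : A → A → Prop) (hr0 : IsStrictTotalOrder A r0)
    (hflex : ∀ r' r : A → A → Prop, IsStrictTotalOrder A r' → IsStrictTotalOrder A r →
      freq π r' > freq π r → invDist r' r0 ≤ invDist r r0)
    (a b : A) (hab : r0 a b) :
    votesFor π b a ≤ votesFor π a b := by
  classical
  set f : Fin π.length → (A → A → Prop) := π.get with hf
  have hmemπ : ∀ i : Fin π.length, f i ∈ π := by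
    intro i
    have := List.get_mem π i
    simpa [hf] using this
  have hvotes : ∀ x y : A, votesFor π x y =
      (Finset.univ.filter fun i => f i x y).card := by
    intro x y
    have hset : {i : Fin π.length | π.get i x y} =
        ↑(Finset.univ.filter fun i => f i x y) := by
      ext i; simp [hf]
    rw [votesFor, hset, Set.ncard_coe_finset]
  have hfreq : ∀ s : A → A → Prop, freq π s =
      (Finset.univ.filter fun i => f i = s).card := by
    intro s
    have hset : {i : Fin π.length | π.get i = s} =
        ↑(Finset.univ.filter fun i => f i = s) := by
      ext i; simp [hf]
    rw [freq, hset, Set.ncard_coe_finset]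
  set T : (A → A → Prop) → (A → A → Prop) := swapPref a b with hT
  have hTT : ∀ s, T (T s) = s := swapPref_swapPref a b
  have hTinj : Function.Injective T := fun x y h => by
    rw [← hTT x, h, hTT]
  have hTab : ∀ s : A → A → Prop, T s a b = s b a := by
    intro s
    simp [hT, swapPref]
  set V : Finset (A → A → Prop) := (Finset.univ.filter fun i => f i b a).image f with hV
  have hVprop : ∀ s ∈ V, s b a ∧ s ∈ π := by
    intro s hs
    rw [hV] at hs
    obtain ⟨i, hi, rfl⟩ := Finset.mem_image.mp hs
    rw [Finset.mem_filter] at hi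
    exact ⟨hi.2, hmemπ i⟩
  have step1 : votesFor π b a =
      ∑ s ∈ V, (Finset.univ.filter fun i => f i = s).card := by
    rw [hvotes b a, Finset.card_eq_sum_card_image f]
    apply Finset.sum_congr rfl
    intro s hs
    congr 1
    ext i
    simp only [Finset.mem_filter, Finset.mem_univ, true_and]
    constructor
    · rintro ⟨h1, h2⟩; exact h2
    · intro h2; exact ⟨h2 ▸ (hVprop s hs).1, h2⟩
  have step2 : ∀ s ∈ V, (Finset.univ.filter fun i => f i = s).card ≤
      (Finset.univ.filter fun i => f i = T s).card := by
    intro s hs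
    obtain ⟨hsba, hsπ⟩ := hVprop s hs
    by_contra hlt
    push_neg at hlt
    have hgt : freq π s > freq π (T s) := by
      rw [hfreq, hfreq]; exact hlt
    have hle := hflex s (T s) (hπ s hsπ) (swapPref_sto a b s (hπ s hsπ)) hgt
    exact absurd hle (not_le.mpr (invDist_swapPref_lt s r0 (hπ s hsπ) hr0 a b hab hsba))
  have step3 : ∑ s ∈ V.image T, (Finset.univ.filter fun i => f i = s).card =
      ∑ s ∈ V, (Finset.univ.filter fun i => f i = T s).card :=
    Finset.sum_image (fun x _ y _ h => hTinj h)
  have step4 : ∑ s ∈ V.image T, (Finset.univ.filter fun i => f i = s).card ≤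
      (Finset.univ.filter fun i => f i a b).card := by
    have hdisj : ∀ s ∈ V.image T, ∀ t ∈ V.image T, s ≠ t →
        Disjoint (Finset.univ.filter fun i => f i = s)
          (Finset.univ.filter fun i => f i = t) := by
      intro s _ t _ hst
      rw [Finset.disjoint_left]
      intro i hi1 hi2
      rw [Finset.mem_filter] at hi1 hi2
      exact hst (hi1.2 ▸ hi2.2 ▸ rfl)
    rw [← Finset.card_biUnion hdisj]
    apply Finset.card_le_card
    intro i hi
    rw [Finset.mem_biUnion] at hi
    obtain ⟨s, hs, hi⟩ := hi
    rw [Finset.mem_filter] at hi ⊢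
    obtain ⟨t, ht, rfl⟩ := Finset.mem_image.mp hs
    refine ⟨Finset.mem_univ _, ?_⟩
    rw [hi.2, hTab]
    exact (hVprop t ht).1
  calc votesFor π b a = ∑ s ∈ V, (Finset.univ.filter fun i => f i = s).card := step1
    _ ≤ ∑ s ∈ V, (Finset.univ.filter fun i => f i = T s).card := Finset.sum_le_sum step2
    _ = ∑ s ∈ V.image T, (Finset.univ.filter fun i => f i = s).card := step3.symm
    _ ≤ (Finset.univ.filter fun i => f i a b).card := step4
    _ = votesFor π a b := (hvotes a b).symm
end
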